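/- arXiv:2403.06502 — 2 statements merged into one kernel-verified Lean document; each statement's English description precedes it below -/
import Mathlib

section
/- Let f : ℝ^d → ℝ be convex with a minimizer x*, and suppose every subgradient of f at every point has Euclidean norm at most L. For ε > 0, suppose the sublevel set C(ε) = {x : f(x) ≤ f(x*) + ε} is contained in the ball B(x*, δ) for some δ > 0. Then for every x ∉ C(ε) and every subgradient g ∈ ∂f(x), the angle between -g and x* - x is at most arccos(ε/(Lδ)), which is strictly less than π/2. -/
open InnerProductGeometry RealInnerProductSpace

private lemma arccos_anti' {x y : ℝ} (h : x ≤ y) : Real.arccos y ≤ Real.arccos x := by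
  unfold Real.arccos
  have := Real.monotone_arcsin h
  linarith

theorem subgrad_angle_bound (d : ℕ) (f : EuclideanSpace ℝ (Fin d) → ℝ)
    (xstar : EuclideanSpace ℝ (Fin d)) (L ε δ : ℝ)
    (hconv : ConvexOn ℝ Set.univ f)
    (hmin : ∀ y, f xstar ≤ f y)
    (hL : ∀ x g : EuclideanSpace ℝ (Fin d),
      (∀ y, f x + ⟪g, y - x⟫ ≤ f y) → ‖g‖ ≤ L)
    (hε : 0 < ε) (hδ : 0 < δ)
    (hsub : {x | f x ≤ f xstar + ε} ⊆ Metric.closedBall xstar δ) :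
    ∀ x : EuclideanSpace ℝ (Fin d), x ∉ {x | f x ≤ f xstar + ε} →
      ∀ g : EuclideanSpace ℝ (Fin d), (∀ y, f x + ⟪g, y - x⟫ ≤ f y) →
        angle (-g) (xstar - x) ≤ Real.arccos (ε / (L * δ)) ∧
        Real.arccos (ε / (L * δ)) < Real.pi / 2 := by
  intro x hx g hg
  have hfx : f xstar + ε < f x := by
    simpa using lt_of_not_ge hx
  -- r = distance
  set r : ℝ := ‖xstar - x‖ with hr
  have hrpos : 0 < r := by
    rw [hr, norm_pos_iff, sub_ne_zero]
    intro h
    rw [← h] at hfx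
    linarith
  -- key growth lemma: f x - f xstar ≥ (ε / δ) * r
  have hgrow : ε * r ≤ (f x - f xstar) * δ := by
    rcases le_or_gt r δ with hcase | hcase
    · nlinarith
    · -- r > δ; let D = ε * r / (f x - f xstar), show D ≤ δ by contradiction
      by_contra hcon
      push_neg at hcon
      set F : ℝ := f x - f xstar with hF
      have hFpos : ε < F := by simp [hF]; linarith
      set D : ℝ := ε * r / F with hD
      have hDδ : δ < D := by
        rw [hD, lt_div_iff₀ (by linarith)]
        nlinarith
      have hDr : D < r := by
        rw [hD, div_lt_iff₀ (by linarith)]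
        nlinarith
      set s : ℝ := D / r with hs
      have hs0 : 0 < s := by
        apply div_pos _ hrpos
        linarith
      have hs1 : s < 1 := by
        rw [hs, div_lt_one hrpos]; exact hDr
      set y : EuclideanSpace ℝ (Fin d) := (1 - s) • xstar + s • x with hy
      have hyd : ‖y - xstar‖ = D := by
        have : y - xstar = s • (x - xstar) := by
          rw [hy]; module
        rw [this, norm_smul, Real.norm_eq_abs, abs_of_pos hs0]
        have : ‖x - xstar‖ = r := by rw [hr, norm_sub_rev]
        rw [this, hs]
        field_simp
      have hyconv : f y ≤ (1 - s) * f xstar + s * f x :=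
        hconv.2 (Set.mem_univ xstar) (Set.mem_univ x) (by linarith) (le_of_lt hs0) (by ring)
      have hyout : f xstar + ε < f y := by
        by_contra hyin
        push_neg at hyin
        have := hsub hyin
        rw [Metric.mem_closedBall, dist_eq_norm, hyd] at this
        linarith
      have hr0 : r ≠ 0 := ne_of_gt hrpos
      have hF0 : F ≠ 0 := ne_of_gt (lt_trans hε hFpos)
      have hsF : s * F = ε := by
        rw [hs, hD]
        field_simp
      nlinarith [hsF, hyconv, hyout]
  -- subgradient inequality at x toward xstar
  have hinner : ε * r / δ ≤ ⟪-g, xstar - x⟫ := by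
    have h1 := hg xstar
    rw [inner_neg_left]
    have : ⟪g, xstar - x⟫ ≤ f xstar - f x := by linarith
    have h2 : ε * r / δ ≤ f x - f xstar := by
      rw [div_le_iff₀ hδ]; linarith
    linarith
  have hinnerpos : 0 < ⟪-g, xstar - x⟫ := lt_of_lt_of_le (by positivity) hinner
  have hgL : ‖g‖ ≤ L := hL x g hg
  have hgpos : 0 < ‖g‖ := by
    rw [norm_pos_iff]
    intro h
    rw [h, neg_zero, inner_zero_left] at hinnerpos
    linarith
  have hLpos : 0 < L := lt_of_lt_of_le hgpos hgL
  have hLδ : 0 < L * δ := mul_pos hLpos hδ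
  constructor
  · -- angle bound
    have hratio : ε / (L * δ) ≤ ⟪-g, xstar - x⟫ / (‖-g‖ * ‖xstar - x‖) := by
      rw [norm_neg]
      rw [div_le_div_iff₀ hLδ (by positivity)]
      have h1 : ε * r ≤ ⟪-g, xstar - x⟫ * δ := by
        rw [div_le_iff₀ hδ] at hinner
        linarith
      nlinarith [mul_le_mul_of_nonneg_left hgL (mul_nonneg hε.le hrpos.le),
        mul_le_mul_of_nonneg_left h1 hLpos.le]
    exact le_trans (arccos_anti' hratio) (le_refl _)
  · rw [Real.arccos_lt_pi_div_two]
    positivity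
end

section
/- Let {η̂[k]}_{k≥0} be a sequence of nonnegative reals with ∑_{k=0}^∞ η̂[k] = ∞. Let γ₁ ≥ 0, γ₂ > 0, and λ ∈ (-1, 1). Then there is no sequence {u[k]}_{k≥0} of nonnegative reals satisfying u[k+1]² = (u[k] + γ₁ λ^k)² − γ₂ η̂[k] for all k ≥ 0. -/
theorem no_nonneg_sequence (η : ℕ → ℝ) (hη : ∀ k, 0 ≤ η k)
    (hdiv : Filter.Tendsto (fun n => ∑ k ∈ Finset.range n, η k) Filter.atTop Filter.atTop)
    (γ₁ γ₂ lam : ℝ) (hγ₁ : 0 ≤ γ₁) (hγ₂ : 0 < γ₂) (hlam₁ : -1 < lam) (hlam₂ : lam < 1) :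
    ¬ ∃ u : ℕ → ℝ, (∀ k, 0 ≤ u k) ∧
      ∀ k, (u (k + 1)) ^ 2 = (u k + γ₁ * lam ^ k) ^ 2 - γ₂ * η k := by
  rintro ⟨u, hu, hrec⟩
  set L := |lam| with hLdef

  have hL0 : (0:ℝ) ≤ L := abs_nonneg _
  have hL1 : L < 1 := abs_lt.mpr ⟨hlam₁, hlam₂⟩
  have h1L : (0:ℝ) < 1 - L := by linarith
  -- geometric sum bound
  have hgeo : ∀ n : ℕ, ∑ j ∈ Finset.range n, L ^ j ≤ 1 / (1 - L) := by
    intro n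
    have h : ∑ j ∈ Finset.range n, L ^ j ≤ (1 - L ^ n) / (1 - L) := by
      induction n with
      | zero => simp
      | succ n ih =>
        rw [Finset.sum_range_succ]
        have hLn : (0:ℝ) ≤ L ^ n := pow_nonneg hL0 n
        have : (1 - L ^ n) / (1 - L) + L ^ n = (1 - L ^ (n+1)) / (1 - L) := by
          field_simp
          ring
        linarith
    have hLn : (0:ℝ) ≤ L ^ n := pow_nonneg hL0 n
    have : (1 - L ^ n) / (1 - L) ≤ 1 / (1 - L) :=
      (div_le_div_iff_of_pos_right h1L).mpr (by linarith)
    linarith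
  obtain ⟨M, hMdef⟩ : ∃ M : ℝ, M = u 0 + γ₁ / (1 - L) := ⟨_, rfl⟩
  have hM0 : 0 ≤ M := by
    have : 0 ≤ γ₁ / (1 - L) := div_nonneg hγ₁ h1L.le
    have := hu 0; rw [hMdef]; linarith
  -- step bound : u (k+1) ≤ u k + γ₁ * L ^ k
  have hstep : ∀ k, u (k+1) ≤ u k + γ₁ * L ^ k := by
    intro k
    have hLk : (0:ℝ) ≤ L ^ k := pow_nonneg hL0 k
    have habs : (lam ^ k) ^ 2 = (L ^ k) ^ 2 := by
      rw [hLdef, ← abs_pow, sq_abs]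
    have hb1 : lam ^ k ≤ L ^ k := by
      rw [hLdef, ← abs_pow]; exact le_abs_self _
    have hb2 : -(L ^ k) ≤ lam ^ k := by
      rw [hLdef, ← abs_pow]; exact neg_abs_le _
    have hsq : u (k+1) ^ 2 ≤ (u k + γ₁ * L ^ k) ^ 2 := by
      have := hrec k
      have hηk := hη k
      nlinarith [mul_nonneg hγ₂.le hηk, hu k, mul_le_mul_of_nonneg_left hb1 hγ₁,
        mul_le_mul_of_nonneg_left hb2 hγ₁, mul_nonneg (hu k) hγ₁]
    have h1 : 0 ≤ u (k+1) := hu (k+1)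
    have h2 : 0 ≤ u k + γ₁ * L ^ k := add_nonneg (hu k) (by positivity)
    nlinarith
  -- uniform bound on u
  have hub : ∀ k, u k ≤ M := by
    intro k
    have key : u k ≤ u 0 + γ₁ * ∑ j ∈ Finset.range k, L ^ j := by
      induction k with
      | zero => simp
      | succ k ih =>
        have := hstep k
        rw [Finset.sum_range_succ]
        linarith
    have := hgeo k
    have h2 : γ₁ * ∑ j ∈ Finset.range k, L ^ j ≤ γ₁ * (1 / (1 - L)) :=
      mul_le_mul_of_nonneg_left this hγ₁
    rw [hMdef, div_eq_mul_one_div]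
    linarith
  -- main induction
  obtain ⟨c, hcdef⟩ : ∃ c : ℝ, c = 2 * γ₁ * M + γ₁ ^ 2 := ⟨_, rfl⟩
  have hc0 : 0 ≤ c := by rw [hcdef]; positivity
  have key : ∀ n, γ₂ * ∑ k ∈ Finset.range n, η k + u n ^ 2 ≤
      u 0 ^ 2 + c * ∑ k ∈ Finset.range n, L ^ k := by
    intro n
    induction n with
    | zero => simp
    | succ n ih =>
      rw [Finset.sum_range_succ, Finset.sum_range_succ]
      have hr := hrec n
      have hLn : (0:ℝ) ≤ L ^ n := pow_nonneg hL0 n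
      have hLn1 : L ^ n ≤ 1 := pow_le_one₀ hL0 hL1.le
      have habs : (lam ^ n) ^ 2 = (L ^ n) ^ 2 := by
        rw [hLdef, ← abs_pow, sq_abs]
      have hb1 : lam ^ n ≤ L ^ n := by
        rw [hLdef, ← abs_pow]; exact le_abs_self _
      have hb2 : -(L ^ n) ≤ lam ^ n := by
        rw [hLdef, ← abs_pow]; exact neg_abs_le _
      have hun := hu n
      have hunM := hub n
      -- need: (u n + γ₁ * lam ^ n)^2 ≤ u n ^ 2 + c * L ^ n
      have hkey : (u n + γ₁ * lam ^ n) ^ 2 ≤ u n ^ 2 + c * L ^ n := by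
        rw [hcdef]
        have e1 : γ₁ * u n * lam ^ n ≤ γ₁ * u n * L ^ n :=
          mul_le_mul_of_nonneg_left hb1 (mul_nonneg hγ₁ hun)
        have e2 : γ₁ * u n * L ^ n ≤ γ₁ * M * L ^ n :=
          mul_le_mul_of_nonneg_right (mul_le_mul_of_nonneg_left hunM hγ₁) hLn
        have e3 : (L ^ n) ^ 2 ≤ L ^ n := by nlinarith
        have e4 : γ₁ ^ 2 * (lam ^ n) ^ 2 ≤ γ₁ ^ 2 * L ^ n := by
          rw [habs]; nlinarith [sq_nonneg γ₁]
        nlinarith [e1, e2, e4]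
      linarith
  -- bound on partial sums, contradiction
  have hbound : ∀ n, ∑ k ∈ Finset.range n, η k ≤ (u 0 ^ 2 + c * (1 / (1 - L))) / γ₂ := by
    intro n
    rw [le_div_iff₀ hγ₂]
    have h1 := key n
    have h2 : c * ∑ k ∈ Finset.range n, L ^ k ≤ c * (1 / (1 - L)) :=
      mul_le_mul_of_nonneg_left (hgeo n) hc0
    have h3 : 0 ≤ u n ^ 2 := sq_nonneg _
    have h4 : γ₂ * ∑ k ∈ Finset.range n, η k ≤ u 0 ^ 2 + c * (1 / (1 - L)) := by linarith
    linarith [mul_comm γ₂ (∑ k ∈ Finset.range n, η k)]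
  obtain ⟨n, hn⟩ := (hdiv.eventually_ge_atTop ((u 0 ^ 2 + c * (1 / (1 - L))) / γ₂ + 1)).exists
  have := hbound n
  linarith
end
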